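/- Let C be a Type I code of length n over Z_{2^m} with shadow S = C_0^⊥ \ C, where C_0 is the doubly-even subcode of index 2 in C. Then for every s ∈ S, wt_E(s) ≡ 2^{m−2}·n (mod 2^{m+1}). -/

import Mathlib

open Finset

/-- Standard bilinear (dot) product on `Fin n → R`. -/
def dotp {R : Type*} [CommRing R] {n : ℕ} (u v : Fin n → R) : R := ∑ i, u i * v i

/-- Dual of a set of vectors with respect to the standard bilinear form. -/
def dualCode {R : Type*} [CommRing R] {n : ℕ} (S : Set (Fin n → R)) : Set (Fin n → R) :=
  {v | ∀ u ∈ S, dotp u v = 0}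

/-- Euclidean weight of an element of `ZMod N`. -/
def wtE {N : ℕ} (a : ZMod N) : ℕ := min (a.val ^ 2) ((N - a.val) ^ 2)

/-- Euclidean weight of a vector. -/
def wtEv {N n : ℕ} (v : Fin n → ZMod N) : ℕ := ∑ i, wtE (v i)

/-- Doubly-even subcode (as a set): codewords of Euclidean weight divisible by 2^(m+1). -/
def deSub (m n : ℕ) (C : AddSubgroup (Fin n → ZMod (2 ^ m))) : Set (Fin n → ZMod (2 ^ m)) :=
  {c | c ∈ C ∧ 2 ^ (m + 1) ∣ wtEv c}

/-! ### Auxiliary material: a primitive (2K)-th root of unity and Gauss sums -/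

noncomputable def zz (K : ℕ) : ℂ := Complex.exp (Real.pi * Complex.I / K)

lemma zz_ne_zero (K : ℕ) : zz K ≠ 0 := Complex.exp_ne_zero _

lemma zz_pow_two_K (K : ℕ) (hK : 0 < K) : zz K ^ (2 * K) = 1 := by
  rw [zz, ← Complex.exp_nat_mul, Complex.exp_eq_one_iff]
  refine ⟨1, ?_⟩
  have hK' : (K : ℂ) ≠ 0 := by exact_mod_cast hK.ne'
  field_simp
  push_cast
  ring

lemma zz_pow_K (K : ℕ) (hK : 0 < K) : zz K ^ K = -1 := by
  rw [zz, ← Complex.exp_nat_mul]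
  have hK' : (K : ℂ) ≠ 0 := by exact_mod_cast hK.ne'
  rw [show (K : ℂ) * (Real.pi * Complex.I / K) = Real.pi * Complex.I by field_simp]
  exact Complex.exp_pi_mul_I

lemma zz_pow_congr {K : ℕ} (hK : 0 < K) {a b : ℕ} (h : a ≡ b [MOD 2 * K]) :
    zz K ^ a = zz K ^ b := by
  have key : ∀ c : ℕ, zz K ^ c = zz K ^ (c % (2 * K)) := by
    intro c
    conv_lhs => rw [show c = 2 * K * (c / (2 * K)) + c % (2 * K) from (Nat.div_add_mod c (2*K)).symm]
    rw [pow_add, pow_mul, zz_pow_two_K K hK, one_pow, one_mul]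
  rw [key a, key b, h]

lemma zz_pow_eq_one_iff {K : ℕ} (hK : 0 < K) {a : ℕ} :
    zz K ^ a = 1 ↔ 2 * K ∣ a := by
  constructor
  · intro h
    rw [zz, ← Complex.exp_nat_mul, Complex.exp_eq_one_iff] at h
    obtain ⟨t, ht⟩ := h
    have hK' : (K : ℂ) ≠ 0 := by exact_mod_cast hK.ne'
    have hpi : (Real.pi : ℂ) ≠ 0 := by exact_mod_cast Real.pi_ne_zero
    have : (a : ℂ) = t * (2 * K) := by
      field_simp at ht
      have hI := Complex.I_ne_zero
      apply mul_right_cancel₀ (mul_ne_zero hpi hI)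
      rw [mul_assoc]
      rw [ht]; ring
    have : (a : ℤ) = t * (2 * K) := by exact_mod_cast this
    have hdvd : ((2 * K : ℕ) : ℤ) ∣ (a : ℤ) := ⟨t, by push_cast; linarith [this]⟩
    exact_mod_cast hdvd
  · rintro ⟨t, rfl⟩
    rw [pow_mul, zz_pow_two_K K hK, one_pow]

lemma zz_pow_inj {K : ℕ} (hK : 0 < K) {a b : ℕ} (h : zz K ^ a = zz K ^ b) :
    a ≡ b [MOD 2 * K] := by
  rcases le_total a b with hab | hab
  · obtain ⟨d, rfl⟩ := Nat.exists_eq_add_of_le hab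
    rw [pow_add] at h
    have h1 : zz K ^ d = 1 :=
      mul_left_cancel₀ (pow_ne_zero a (zz_ne_zero K)) (by rw [mul_one, ← h])
    refine (Nat.modEq_iff_dvd' (Nat.le_add_right _ _)).mpr ?_
    simpa using (zz_pow_eq_one_iff hK).mp h1
  · obtain ⟨d, rfl⟩ := Nat.exists_eq_add_of_le hab
    rw [pow_add] at h
    have h1 : zz K ^ d = 1 :=
      mul_left_cancel₀ (pow_ne_zero b (zz_ne_zero K)) (by rw [mul_one, h])
    refine ((Nat.modEq_iff_dvd' (Nat.le_add_right _ _)).mpr ?_).symm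
    simpa using (zz_pow_eq_one_iff hK).mp h1

lemma zz_four_val : zz 4 = (Real.sqrt 2 / 2 : ℝ) * (1 + Complex.I) := by
  rw [zz]
  rw [show (Real.pi : ℂ) * Complex.I / (4:ℕ) = (Real.pi/4 : ℝ) * Complex.I by push_cast; ring]
  rw [Complex.exp_mul_I]
  rw [← Complex.ofReal_cos, ← Complex.ofReal_sin, Real.cos_pi_div_four, Real.sin_pi_div_four]
  push_cast
  ring

lemma zz_two_val : zz 2 = Complex.I := by
  rw [zz]
  rw [show (Real.pi : ℂ) * Complex.I / (2:ℕ) = (Real.pi/2 : ℝ) * Complex.I by push_cast; ring]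
  rw [Complex.exp_mul_I, ← Complex.ofReal_cos, ← Complex.ofReal_sin,
    Real.cos_pi_div_two, Real.sin_pi_div_two]
  simp

lemma zz_step (k : ℕ) : zz (2 ^ (k + 2)) ^ 4 = zz (2 ^ k) := by
  rw [zz, zz, ← Complex.exp_nat_mul]
  congr 1
  have h1 : ((2 ^ (k+2) : ℕ) : ℂ) ≠ 0 := by
    exact_mod_cast (pow_pos (by norm_num : 0 < 2) _).ne'
  have h2 : ((2 ^ k : ℕ) : ℂ) ≠ 0 := by
    exact_mod_cast (pow_pos (by norm_num : 0 < 2) _).ne'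
  field_simp
  push_cast
  ring

lemma zz_quarter (k : ℕ) : zz (2 ^ (k + 2)) ^ (2 ^ k) = zz 4 := by
  rw [zz, zz, ← Complex.exp_nat_mul]
  congr 1
  have h1 : ((2 ^ (k+2) : ℕ) : ℂ) ≠ 0 := by
    exact_mod_cast (pow_pos (by norm_num : 0 < 2) _).ne'
  have h4 : ((4 : ℕ) : ℂ) ≠ 0 := by norm_num
  field_simp
  push_cast
  ring

lemma sqrt2_sq : ((Real.sqrt 2 : ℝ) : ℂ) * ((Real.sqrt 2 : ℝ) : ℂ) = 2 := by
  rw [← Complex.ofReal_mul, Real.mul_self_sqrt (by norm_num : (0:ℝ) ≤ 2)]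
  norm_num

lemma sqrt2_pow2 : ((Real.sqrt 2 : ℝ) : ℂ) ^ 2 = 2 := by
  rw [sq]; exact sqrt2_sq

lemma sum_range_two_mul {M : Type*} [AddCommMonoid M] (N : ℕ) (f : ℕ → M) :
    ∑ a ∈ range (2 * N), f a = ∑ b ∈ range N, f (2 * b) + ∑ b ∈ range N, f (2 * b + 1) := by
  induction N with
  | zero => simp
  | succ N ih =>
      rw [show 2 * (N + 1) = (2 * N) + 1 + 1 by ring, sum_range_succ, sum_range_succ,
        sum_range_succ (fun b => f (2 * b)), sum_range_succ (fun b => f (2 * b + 1)), ih]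
      ring_nf
      abel

lemma gaussEval : ∀ m : ℕ, 1 ≤ m →
    (∑ a ∈ range (2 ^ m), zz (2 ^ m) ^ (a ^ 2)) = ((Real.sqrt 2 : ℝ) : ℂ) ^ m * zz 4 := by
  intro m
  induction m using Nat.strong_induction_on with
  | _ m ih =>
    intro hm
    match m with
    | 1 =>
        rw [show (2:ℕ)^1 = 2 by norm_num, sum_range_succ, sum_range_succ, sum_range_zero]
        norm_num [zz_two_val, zz_four_val, pow_one]
        push_cast
        linear_combination (-(1 + Complex.I) / 2) * sqrt2_pow2
    | 2 =>
        rw [show (2:ℕ)^2 = 4 by norm_num]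
        rw [sum_range_succ, sum_range_succ, sum_range_succ, sum_range_succ, sum_range_zero]
        norm_num
        rw [zz_pow_K 4 (by norm_num), zz_pow_congr (by norm_num : 0 < 4) (by decide : 9 ≡ 1 [MOD 8])]
        rw [pow_one]
        linear_combination (- zz 4) * sqrt2_pow2
    | (k+3) =>
        set j := k + 1 with hj
        have hj1 : 1 ≤ j := Nat.le_add_left 1 k
        obtain ⟨P, hP⟩ : ∃ P, 2 ^ j = 2 * P := ⟨2 ^ k, by rw [hj, pow_succ]; ring⟩
        have hNpos : 0 < 2 ^ j := pow_pos (by norm_num) _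
        have hKpos : 0 < 2 ^ (j + 2) := pow_pos (by norm_num) _
        have hsplit : (2:ℕ) ^ (j + 2) = 2 * 2 ^ (j + 1) := by rw [pow_succ]; ring
        have hhalf : (2:ℕ) ^ (j + 1) = 2 ^ j + 2 ^ j := by rw [pow_succ]; ring
        have hm3 : k + 3 = j + 2 := by omega
        rw [hm3, hsplit, sum_range_two_mul, ← hsplit]
        have heven : ∑ b ∈ range (2 ^ (j+1)), zz (2 ^ (j+2)) ^ ((2 * b) ^ 2)
            = 2 * (((Real.sqrt 2 : ℝ) : ℂ) ^ j * zz 4) := by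
          have e1 : ∀ b : ℕ, zz (2 ^ (j+2)) ^ ((2 * b) ^ 2) = zz (2 ^ j) ^ (b ^ 2) := by
            intro b
            rw [show (2 * b) ^ 2 = 4 * b ^ 2 by ring, pow_mul, zz_step]
          simp only [e1]
          rw [hhalf, Finset.sum_range_add]
          have e2 : ∀ c : ℕ, zz (2 ^ j) ^ ((2 ^ j + c) ^ 2) = zz (2 ^ j) ^ (c ^ 2) := by
            intro c
            refine zz_pow_congr hNpos ?_
            rw [Nat.ModEq.comm, Nat.modEq_iff_dvd]
            refine ⟨(P + c : ℤ), ?_⟩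
            push_cast [hP]
            ring
          simp only [e2]
          rw [← ih j (by omega) hj1]
          ring
        have hodd : ∑ b ∈ range (2 ^ (j+1)), zz (2 ^ (j+2)) ^ ((2 * b + 1) ^ 2) = 0 := by
          rw [hhalf, Finset.sum_range_add]
          have e3 : ∀ c : ℕ, zz (2 ^ (j+2)) ^ ((2 * (2 ^ j + c) + 1) ^ 2)
              = - zz (2 ^ (j+2)) ^ ((2 * c + 1) ^ 2) := by
            intro c
            rw [show (2 * (2 ^ j + c) + 1) ^ 2
                = (2 * c + 1) ^ 2 + 2 ^ (j+2) * ((2 * c + 1) + 2 ^ j) by ring]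
            rw [pow_add, pow_mul, zz_pow_K _ hKpos]
            rw [Odd.neg_one_pow ⟨c + P, by rw [hP]; ring⟩]
            ring
          simp only [e3]
          simp
        rw [heven, hodd, add_zero]
        have hp : ((Real.sqrt 2 : ℝ) : ℂ) ^ (j + 2) = ((Real.sqrt 2 : ℝ) : ℂ) ^ j * 2 := by
          rw [pow_add, sqrt2_pow2]
        linear_combination zz 4 * hp - 2 * ((Real.sqrt 2 : ℝ) : ℂ) ^ (k + 1) * zz 4 * sqrt2_pow2

/-! ### Congruence utilities -/

lemma modEq_sum {ι : Type*} (s : Finset ι) (f g : ι → ℕ) (N : ℕ)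
    (h : ∀ i ∈ s, f i ≡ g i [MOD N]) : (∑ i ∈ s, f i) ≡ (∑ i ∈ s, g i) [MOD N] := by
  classical
  induction s using Finset.induction_on with
  | empty => simp [Nat.ModEq.refl]
  | insert x s hx ih =>
      rw [Finset.sum_insert hx, Finset.sum_insert hx]
      exact Nat.ModEq.add (h _ (Finset.mem_insert_self _ _))
        (ih fun i hi => h i (Finset.mem_insert_of_mem hi))

lemma sq_modEq {a b P : ℕ} (h : a ≡ b [MOD 2 * P]) : a * a ≡ b * b [MOD 2 * (2 * P)] := by
  rw [Nat.modEq_iff_dvd] at h ⊢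
  obtain ⟨t, ht⟩ := h
  refine ⟨t * (P * t + a), ?_⟩
  push_cast
  push_cast at ht
  linear_combination (↑a + ↑b + 2 * (P : ℤ) * t) * ht

lemma modEq_dvd_iff {a b N : ℕ} (h : a ≡ b [MOD N]) : N ∣ a ↔ N ∣ b := by
  unfold Nat.ModEq at h
  rw [Nat.dvd_iff_mod_eq_zero, Nat.dvd_iff_mod_eq_zero, h]

section ZModStuff
variable {N nn : ℕ} [NeZero N]

lemma val_add_modEq (a b : ZMod N) : (a + b).val ≡ a.val + b.val [MOD N] := by
  rw [ZMod.val_add]; exact Nat.mod_modEq _ _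

/-- Integer-valued dot product of value vectors. -/
def dS (v w : Fin nn → ZMod N) : ℕ := ∑ i, (v i).val * (w i).val

omit [NeZero N] in
lemma dotp_comm (v w : Fin nn → ZMod N) : dotp v w = dotp w v := by
  simp [dotp, mul_comm]

omit [NeZero N] in
lemma dotp_add_left (u v w : Fin nn → ZMod N) : dotp (u + v) w = dotp u w + dotp v w := by
  simp [dotp, add_mul, Finset.sum_add_distrib]

omit [NeZero N] in
lemma dotp_add_right (u v w : Fin nn → ZMod N) : dotp u (v + w) = dotp u v + dotp u w := by
  rw [dotp_comm, dotp_add_left, dotp_comm v u, dotp_comm w u]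

omit [NeZero N] in
lemma dotp_single (i : Fin nn) (w : Fin nn → ZMod N) :
    dotp (Pi.single i (1 : ZMod N)) w = w i := by
  rw [dotp]
  rw [Finset.sum_eq_single i]
  · simp
  · intro b _ hb
    simp [Pi.single_apply, hb]
  · simp

lemma dS_modEq (v w : Fin nn → ZMod N) : dS v w ≡ (dotp v w).val [MOD N] := by
  rw [← ZMod.natCast_eq_natCast_iff]
  have h1 : ((dS v w : ℕ) : ZMod N) = dotp v w := by
    push_cast [dS, dotp]
    simp [ZMod.natCast_val, ZMod.cast_id]
  have h2 : (((dotp v w).val : ℕ) : ZMod N) = dotp v w := by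
    simp [ZMod.natCast_val, ZMod.cast_id]
  rw [h1, h2]

lemma wtE_neg (a : ZMod N) : wtE (-a) = wtE a := by
  have hv : a.val < N := ZMod.val_lt a
  rw [wtE, wtE, ZMod.neg_val]
  split_ifs with h
  · subst h; simp
  · rw [show N - (N - a.val) = a.val from by omega, min_comm]

lemma wtEv_neg (v : Fin nn → ZMod N) : wtEv (-v) = wtEv v := by
  rw [wtEv, wtEv]
  exact Finset.sum_congr rfl fun i _ => wtE_neg (v i)

/-- The character attached to `c`. -/
noncomputable def chiF (N : ℕ) {nn : ℕ} (c x : Fin nn → ZMod N) : ℂ :=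
  zz N ^ (2 * (dotp c x).val)

lemma chiF_add_left (hN : 0 < N) (c c' x : Fin nn → ZMod N) :
    chiF N (c + c') x = chiF N c x * chiF N c' x := by
  rw [chiF, chiF, chiF, ← pow_add, dotp_add_left]
  refine zz_pow_congr hN ?_
  have h2 := Nat.ModEq.mul_left' (c := 2) (val_add_modEq (dotp c x) (dotp c' x))
  calc 2 * (dotp c x + dotp c' x).val
      ≡ 2 * ((dotp c x).val + (dotp c' x).val) [MOD 2 * N] := h2
    _ = 2 * (dotp c x).val + 2 * (dotp c' x).val := by ring

omit [NeZero N] in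
lemma dotp_zero_left (w : Fin nn → ZMod N) : dotp 0 w = 0 := by simp [dotp]

omit [NeZero N] in
lemma dotp_zero_right (w : Fin nn → ZMod N) : dotp w 0 = 0 := by simp [dotp]

lemma chiF_comm (c x : Fin nn → ZMod N) : chiF N c x = chiF N x c := by
  rw [chiF, chiF, dotp_comm]

lemma chiF_zero_left (x : Fin nn → ZMod N) : chiF N 0 x = 1 := by
  rw [chiF, dotp_zero_left, ZMod.val_zero, mul_zero, pow_zero]

lemma chiF_ne_one (hN : 0 < N) {c x : Fin nn → ZMod N} (h : dotp c x ≠ 0) : chiF N c x ≠ 1 := by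
  rw [chiF, Ne, zz_pow_eq_one_iff hN]
  intro hdvd
  have hlt : (dotp c x).val < N := ZMod.val_lt _
  have hne : (dotp c x).val ≠ 0 := fun h0 => h ((ZMod.val_eq_zero _).mp h0)
  have := Nat.le_of_dvd (by omega) hdvd
  omega

lemma orth_sum (hN : 0 < N) (A : Finset (Fin nn → ZMod N))
    (hshift : ∀ c1 ∈ A, ∀ c, c ∈ A ↔ c1 + c ∈ A) (x : Fin nn → ZMod N) :
    ∑ c ∈ A, chiF N c x = if ∀ c ∈ A, dotp c x = 0 then (A.card : ℂ) else 0 := by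
  split_ifs with hall
  · rw [Finset.sum_congr rfl (fun c hc => ?_), Finset.sum_const, nsmul_eq_mul, mul_one]
    rw [chiF, hall c hc, ZMod.val_zero, mul_zero, pow_zero]
  · push_neg at hall
    obtain ⟨c1, hc1A, hc1⟩ := hall
    have key : chiF N c1 x * (∑ c ∈ A, chiF N c x) = ∑ c ∈ A, chiF N c x := by
      rw [Finset.mul_sum]
      refine Finset.sum_nbij' (fun c => c1 + c) (fun c => -c1 + c) ?_ ?_ ?_ ?_ ?_
      · intro a ha; exact (hshift c1 hc1A a).mp ha
      · intro a ha
        have := (hshift c1 hc1A (-c1 + a)).mpr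
        simp only [← add_assoc, add_neg_cancel, zero_add] at this
        exact this ha
      · intro a _; simp [← add_assoc]
      · intro a _; simp [← add_assoc]
      · intro a _; rw [← chiF_add_left hN]
    have hz : (chiF N c1 x - 1) * (∑ c ∈ A, chiF N c x) = 0 := by
      rw [sub_mul, one_mul, key, sub_self]
    rcases mul_eq_zero.mp hz with h | h
    · exact absurd (sub_eq_zero.mp h) (chiF_ne_one hN hc1)
    · exact h

end ZModStuff

theorem shadow_weight (m n : ℕ) (hm : 2 ≤ m) (hn : 0 < n)
    (C : AddSubgroup (Fin n → ZMod (2 ^ m)))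
    (hC : (C : Set (Fin n → ZMod (2 ^ m))) = dualCode (C : Set (Fin n → ZMod (2 ^ m))))
    (hTypeI : ∃ c ∈ C, ¬ 2 ^ (m + 1) ∣ wtEv c)
    (s : Fin n → ZMod (2 ^ m)) (hs : s ∈ dualCode (deSub m n C)) (hsC : s ∉ C) :
    wtEv s ≡ 2 ^ (m - 2) * n [MOD 2 ^ (m + 1)] := by
  classical
  haveI : NeZero (2 ^ m) := ⟨(pow_pos (by norm_num) m).ne'⟩
  have hKpos : 0 < 2 ^ m := pow_pos (by norm_num) m
  obtain ⟨q, hq⟩ : ∃ q, m = q + 2 := ⟨m - 2, by omega⟩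
  have h2K : (2:ℕ) ^ (m + 1) = 2 * 2 ^ m := by rw [pow_succ]; ring
  set D : Set (Fin n → ZMod (2 ^ m)) := deSub m n C with hD
  set F : (Fin n → ZMod (2 ^ m)) → ℂ := fun v => zz (2 ^ m) ^ dS v v with hF
  -- basic facts about C
  have hdotCC : ∀ u ∈ C, ∀ v ∈ C, dotp u v = 0 := by
    intro u hu v hv
    have hv' : v ∈ dualCode (C : Set (Fin n → ZMod (2 ^ m))) := hC ▸ hv
    exact hv' u hu
  have hDC : ∀ x ∈ D, x ∈ C := fun x hx => hx.1
  -- weight congruences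
  have hwtE : ∀ v : (Fin n → ZMod (2 ^ m)), wtEv v ≡ dS v v [MOD 2 ^ (m + 1)] := by
    intro v
    refine modEq_sum _ _ _ _ (fun i _ => ?_)
    set a := v i
    have hv : a.val < 2 ^ m := ZMod.val_lt a
    rw [wtE]
    rcases le_total (a.val ^ 2) ((2 ^ m - a.val) ^ 2) with h | h
    · rw [min_eq_left h, sq]
    · rw [min_eq_right h]
      rw [Nat.modEq_iff_dvd]
      have e1 : (2:ℤ) ^ m = 4 * 2 ^ q := by rw [hq]; ring
      have e2 : (2:ℤ) ^ (m+1) = 8 * 2 ^ q := by rw [hq]; ring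
      refine ⟨(a.val : ℤ) - 2 * 2 ^ q, ?_⟩
      push_cast [Nat.cast_sub hv.le]
      linear_combination (2 * (a.val : ℤ) - ((2:ℤ) ^ m + 4 * 2 ^ q)) * e1
        + (2 * 2 ^ q - (a.val : ℤ)) * e2
  have hNNadd : ∀ v w : (Fin n → ZMod (2 ^ m)),
      dS (v + w) (v + w) ≡ dS v v + dS w w + 2 * dS v w [MOD 2 ^ (m + 1)] := by
    intro v w
    have hcoord : ∀ i : Fin n, ((v + w) i).val * ((v + w) i).val
        ≡ ((v i).val + (w i).val) * ((v i).val + (w i).val) [MOD 2 ^ (m + 1)] := by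
      intro i
      have h1 : ((v + w) i).val ≡ (v i).val + (w i).val [MOD 2 ^ m] := val_add_modEq (v i) (w i)
      have h1' : ((v + w) i).val ≡ (v i).val + (w i).val [MOD 2 * 2 ^ (m-1)] := by
        rwa [show 2 * 2 ^ (m-1) = 2 ^ m from by rw [← pow_succ']; congr 1; omega]
      have := sq_modEq h1'
      rwa [show 2 * (2 * 2 ^ (m-1)) = 2 ^ (m+1) from by rw [← pow_succ', ← pow_succ']; congr 1; omega] at this
    have hsum := modEq_sum Finset.univ
      (fun i => ((v + w) i).val * ((v + w) i).val)
      (fun i => ((v i).val + (w i).val) * ((v i).val + (w i).val)) (2 ^ (m+1))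
      (fun i _ => hcoord i)
    have hrhs : ∑ i, ((v i).val + (w i).val) * ((v i).val + (w i).val)
        = dS v v + dS w w + 2 * dS v w := by
      rw [dS, dS, dS, Finset.mul_sum, ← Finset.sum_add_distrib, ← Finset.sum_add_distrib]
      exact Finset.sum_congr rfl fun i _ => by ring
    rw [← hrhs]
    exact hsum
  have hdSC : ∀ u ∈ C, ∀ v ∈ C, dS u v ≡ 0 [MOD 2 ^ m] := by
    intro u hu v hv
    have := dS_modEq u v
    rwa [hdotCC u hu v hv, ZMod.val_zero] at this
  have hNN_C : ∀ c ∈ C, 2 ^ m ∣ dS c c := by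
    intro c hc
    exact (Nat.modEq_zero_iff_dvd).mp (hdSC c hc c hc)
  have hD_iff : ∀ c ∈ C, ((c ∈ D) ↔ 2 ^ (m+1) ∣ dS c c) := by
    intro c hc
    rw [hD, deSub]
    constructor
    · rintro ⟨-, hw⟩; exact (modEq_dvd_iff (hwtE c)).mp hw
    · intro hw; exact ⟨hc, (modEq_dvd_iff (hwtE c)).mpr hw⟩
  have hNN_K : ∀ c ∈ C, c ∉ D → dS c c ≡ 2 ^ m [MOD 2 ^ (m+1)] := by
    intro c hc hcD
    obtain ⟨t, ht⟩ := hNN_C c hc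
    have hnd : ¬ 2 ^ (m+1) ∣ dS c c := fun hw => hcD ((hD_iff c hc).mpr hw)
    rcases Nat.even_or_odd t with ⟨r, hr⟩ | ⟨r, hr⟩
    · exfalso
      exact hnd ⟨r, by rw [ht, hr, h2K]; ring⟩
    · refine ((Nat.modEq_iff_dvd' ?_).mpr ⟨r, ?_⟩).symm
      · rw [ht, hr]; nlinarith [hKpos]
      · have hsub : 2 ^ m * (2 * r + 1) - 2 ^ m = 2 ^ m * (2 * r) := by
          rw [Nat.mul_add, Nat.mul_one, Nat.add_sub_cancel]
        rw [ht, hr, h2K, hsub]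
        ring
  -- divisibility/membership facts established; now the subgroup structure of D
  have hDzero : (0 : (Fin n → ZMod (2 ^ m))) ∈ D := by
    refine ⟨zero_mem C, ?_⟩
    have hz : wtEv (0 : (Fin n → ZMod (2 ^ m))) = 0 := by
      rw [wtEv]
      refine Finset.sum_eq_zero fun i _ => ?_
      have h0i : (0 : (Fin n → ZMod (2 ^ m))) i = 0 := rfl
      rw [h0i]
      simp [wtE, ZMod.val_zero]
    rw [hz]
    exact dvd_zero _
  have hDadd : ∀ a ∈ D, ∀ b ∈ D, a + b ∈ D := by
    intro a ha b hb
    have haC := hDC a ha; have hbC := hDC b hb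
    refine ⟨add_mem haC hbC, ?_⟩
    have h1 : wtEv (a+b) ≡ dS a a + dS b b + 2 * dS a b [MOD 2^(m+1)] :=
      (hwtE _).trans (hNNadd a b)
    have d1 : 2^(m+1) ∣ dS a a := (hD_iff a haC).mp ha
    have d2 : 2^(m+1) ∣ dS b b := (hD_iff b hbC).mp hb
    have d3 : 2^(m+1) ∣ 2 * dS a b := by
      have h2 := Nat.ModEq.mul_left' (c := 2) (hdSC a haC b hbC)
      rw [mul_zero] at h2
      rw [h2K]
      exact (Nat.modEq_zero_iff_dvd).mp h2
    exact (modEq_dvd_iff h1).mpr (dvd_add (dvd_add d1 d2) d3)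
  have hDneg : ∀ a ∈ D, -a ∈ D := by
    intro a ha
    exact ⟨neg_mem (hDC a ha), by rw [wtEv_neg]; exact ha.2⟩
  -- Finsets
  set CF : Finset (Fin n → ZMod (2 ^ m)) := Finset.univ.filter (fun v => v ∈ C) with hCF
  set DF : Finset (Fin n → ZMod (2 ^ m)) := Finset.univ.filter (fun v => v ∈ D) with hDF
  set PF : Finset (Fin n → ZMod (2 ^ m)) := Finset.univ.filter (fun v => v ∈ dualCode D) with hPFdef
  have hmemCF : ∀ v : (Fin n → ZMod (2 ^ m)), v ∈ CF ↔ v ∈ C := by intro v; simp [hCF]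
  have hmemDF : ∀ v : (Fin n → ZMod (2 ^ m)), v ∈ DF ↔ v ∈ D := by intro v; simp [hDF]
  have hmemPF : ∀ v : (Fin n → ZMod (2 ^ m)), v ∈ PF ↔ v ∈ dualCode D := by intro v; simp [hPFdef]
  have hDSHIFT : ∀ c1 ∈ DF, ∀ c, c ∈ DF ↔ c1 + c ∈ DF := by
    intro c1 h1 c
    rw [hmemDF, hmemDF]
    have h1' := (hmemDF c1).mp h1
    constructor
    · intro h; exact hDadd _ h1' _ h
    · intro h
      have := hDadd _ (hDneg _ h1') _ h
      rwa [← add_assoc, neg_add_cancel, zero_add] at this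
  have hCSHIFT : ∀ c1 ∈ CF, ∀ c, c ∈ CF ↔ c1 + c ∈ CF := by
    intro c1 h1 c
    rw [hmemCF, hmemCF]
    have h1' := (hmemCF c1).mp h1
    constructor
    · intro h; exact add_mem h1' h
    · intro h
      have := add_mem (neg_mem h1') h
      rwa [← add_assoc, neg_add_cancel, zero_add] at this
  have hUSHIFT : ∀ c1 ∈ (Finset.univ : Finset (Fin n → ZMod (2 ^ m))), ∀ c : (Fin n → ZMod (2 ^ m)), c ∈ Finset.univ ↔ c1 + c ∈ Finset.univ := by
    simp
  have hcardV : ((Finset.univ : Finset (Fin n → ZMod (2 ^ m))).card : ℕ) = (2^m)^n := by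
    rw [Finset.card_univ]
    simp [ZMod.card]
  -- full-space orthogonality
  have hfullorth : ∀ c : (Fin n → ZMod (2 ^ m)), (∑ v : (Fin n → ZMod (2 ^ m)), chiF (2^m) v c) = if c = 0 then (((2^m)^n : ℕ) : ℂ) else 0 := by
    intro c
    have horth := orth_sum hKpos (Finset.univ : Finset (Fin n → ZMod (2 ^ m))) hUSHIFT c
    split_ifs with h
    · subst h
      rw [horth, if_pos (fun v _ => dotp_zero_right v), hcardV]
    · rw [horth, if_neg]
      push_neg
      obtain ⟨i, hi⟩ := Function.ne_iff.mp h
      exact ⟨Pi.single i 1, Finset.mem_univ _, by rwa [dotp_single]⟩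
  -- the key cardinality identity
  have keycard : ∀ A : Finset (Fin n → ZMod (2 ^ m)), (0:(Fin n → ZMod (2 ^ m))) ∈ A → (∀ c1 ∈ A, ∀ c, c ∈ A ↔ c1 + c ∈ A) →
      A.card * (Finset.univ.filter (fun v : (Fin n → ZMod (2 ^ m)) => ∀ u ∈ A, dotp u v = 0)).card = (2^m)^n := by
    intro A h0 hsh
    have hway1 : ∑ v : (Fin n → ZMod (2 ^ m)), ∑ c ∈ A, chiF (2^m) c v
        = ((Finset.univ.filter (fun v : (Fin n → ZMod (2 ^ m)) => ∀ u ∈ A, dotp u v = 0)).card : ℂ) * A.card := by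
      calc ∑ v : (Fin n → ZMod (2 ^ m)), ∑ c ∈ A, chiF (2^m) c v
          = ∑ v : (Fin n → ZMod (2 ^ m)), if ∀ u ∈ A, dotp u v = 0 then (A.card : ℂ) else 0 :=
            Finset.sum_congr rfl fun v _ => orth_sum hKpos A hsh v
        _ = ∑ v ∈ Finset.univ.filter (fun v : (Fin n → ZMod (2 ^ m)) => ∀ u ∈ A, dotp u v = 0), (A.card:ℂ) :=
            (Finset.sum_filter _ _).symm
        _ = _ := by rw [Finset.sum_const, nsmul_eq_mul]
    have hway2 : ∑ v : (Fin n → ZMod (2 ^ m)), ∑ c ∈ A, chiF (2^m) c v = (((2^m)^n : ℕ) : ℂ) := by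
      rw [Finset.sum_comm]
      calc ∑ c ∈ A, ∑ v : (Fin n → ZMod (2 ^ m)), chiF (2^m) c v
          = ∑ c ∈ A, if c = 0 then (((2^m)^n : ℕ) : ℂ) else 0 := by
            refine Finset.sum_congr rfl fun c _ => ?_
            rw [Finset.sum_congr rfl fun v _ => chiF_comm c v, hfullorth c]
        _ = _ := by rw [Finset.sum_ite_eq' A 0 (fun _ => (((2^m)^n : ℕ) : ℂ)), if_pos h0]
    have h := hway1.symm.trans hway2
    have h2 : ((A.card * (Finset.univ.filter (fun v : (Fin n → ZMod (2 ^ m)) => ∀ u ∈ A, dotp u v = 0)).card : ℕ) : ℂ)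
        = (((2^m)^n : ℕ) : ℂ) := by
      push_cast at h ⊢
      linear_combination h
    exact_mod_cast h2
  have hfiltC : Finset.univ.filter (fun v : (Fin n → ZMod (2 ^ m)) => ∀ u ∈ CF, dotp u v = 0) = CF := by
    ext v
    simp only [Finset.mem_filter, Finset.mem_univ, true_and]
    rw [hmemCF v]
    constructor
    · intro h
      have hv : v ∈ dualCode (C : Set (Fin n → ZMod (2 ^ m))) := fun u hu => h u ((hmemCF u).mpr hu)
      rw [← hC] at hv
      exact hv
    · intro hv u hu
      exact hdotCC u ((hmemCF u).mp hu) v hv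
  have hfiltD : Finset.univ.filter (fun v : (Fin n → ZMod (2 ^ m)) => ∀ u ∈ DF, dotp u v = 0) = PF := by
    ext v
    simp only [Finset.mem_filter, Finset.mem_univ, true_and]
    rw [hmemPF v]
    constructor
    · intro h u hu; exact h u ((hmemDF u).mpr hu)
    · intro hv u hu; exact hv u ((hmemDF u).mp hu)
  have hcardC : CF.card * CF.card = (2^m)^n := by
    have h := keycard CF ((hmemCF 0).mpr (zero_mem C)) hCSHIFT
    rwa [hfiltC] at h
  have hcardDP : DF.card * PF.card = (2^m)^n := by
    have h := keycard DF ((hmemDF 0).mpr hDzero) hDSHIFT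
    rwa [hfiltD] at h
  -- index two
  obtain ⟨c1, hc1C, hc1w⟩ := hTypeI
  have hc1D : c1 ∉ D := fun h => hc1w h.2
  have hflip : ∀ x ∈ C, ((c1 + x) ∈ D ↔ x ∉ D) := by
    intro x hx
    have hsumC : c1 + x ∈ C := add_mem hc1C hx
    have hcong : dS (c1+x) (c1+x) ≡ dS c1 c1 + dS x x + 2 * dS c1 x [MOD 2^(m+1)] := hNNadd c1 x
    have h2d : 2 * dS c1 x ≡ 0 [MOD 2^(m+1)] := by
      have h2 := Nat.ModEq.mul_left' (c := 2) (hdSC c1 hc1C x hx)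
      rw [mul_zero] at h2; rwa [h2K]
    have hK1 : dS c1 c1 ≡ 2^m [MOD 2^(m+1)] := hNN_K c1 hc1C hc1D
    constructor
    · intro hin hxD
      have hx0 : dS x x ≡ 0 [MOD 2^(m+1)] := (Nat.modEq_zero_iff_dvd).mpr ((hD_iff x hx).mp hxD)
      have hKm : dS (c1+x) (c1+x) ≡ 2^m [MOD 2^(m+1)] := by
        calc dS (c1+x) (c1+x) ≡ dS c1 c1 + dS x x + 2*dS c1 x [MOD 2^(m+1)] := hcong
          _ ≡ 2^m + 0 + 0 [MOD 2^(m+1)] := (hK1.add hx0).add h2d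
          _ = 2^m := by ring
      have h0 : dS (c1+x) (c1+x) ≡ 0 [MOD 2^(m+1)] :=
        (Nat.modEq_zero_iff_dvd).mpr ((hD_iff _ hsumC).mp hin)
      have hKm0 : (2:ℕ)^m ≡ 0 [MOD 2^(m+1)] := hKm.symm.trans h0
      have hdv : 2^(m+1) ∣ 2^m := (Nat.modEq_zero_iff_dvd).mp hKm0
      have hle := Nat.le_of_dvd hKpos hdv
      omega
    · intro hxD
      have hxK : dS x x ≡ 2^m [MOD 2^(m+1)] := hNN_K x hx hxD
      refine (hD_iff _ hsumC).mpr ((Nat.modEq_zero_iff_dvd).mp ?_)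
      calc dS (c1+x) (c1+x) ≡ dS c1 c1 + dS x x + 2*dS c1 x [MOD 2^(m+1)] := hcong
        _ ≡ 2^m + 2^m + 0 [MOD 2^(m+1)] := (hK1.add hxK).add h2d
        _ ≡ 0 [MOD 2^(m+1)] := by
            rw [show (2:ℕ)^m + 2^m + 0 = 2^(m+1) from by rw [h2K]; ring]
            exact (Nat.modEq_zero_iff_dvd).mpr dvd_rfl
  have hDFsub : DF ⊆ CF := fun x hx => (hmemCF x).mpr (hDC x ((hmemDF x).mp hx))
  have hcard_half : (CF \ DF).card = DF.card := by
    refine (Finset.card_bij (fun x _ => c1 + x) ?_ ?_ ?_).symm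
    · intro a ha
      have haD := (hmemDF a).mp ha
      have haC := hDC a haD
      rw [Finset.mem_sdiff]
      refine ⟨(hmemCF _).mpr (add_mem hc1C haC), fun hin => ?_⟩
      exact ((hflip a haC).mp ((hmemDF _).mp hin)) haD
    · intro a _ b _ h
      exact add_left_cancel h
    · intro y hy
      rw [Finset.mem_sdiff] at hy
      have hyC := (hmemCF y).mp hy.1
      have hyD : y ∉ D := fun h => hy.2 ((hmemDF y).mpr h)
      refine ⟨-c1 + y, ?_, ?_⟩
      · refine (hmemDF _).mpr ?_
        have hyC' : -c1 + y ∈ C := add_mem (neg_mem hc1C) hyC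
        by_contra hnot
        have hcontr := (hflip _ hyC').mpr hnot
        rw [← add_assoc, add_neg_cancel, zero_add] at hcontr
        exact hyD hcontr
      · show c1 + (-c1 + y) = y
        rw [← add_assoc, add_neg_cancel, zero_add]
  have hcardCF2 : CF.card = 2 * DF.card := by
    have := Finset.card_sdiff_add_card_eq_card hDFsub
    omega
  have hDF0 : 0 < DF.card := Finset.card_pos.mpr ⟨0, (hmemDF 0).mpr hDzero⟩
  have hcardPF : PF.card = 2 * CF.card := by
    have h1 : DF.card * PF.card = CF.card * CF.card := by rw [hcardC, hcardDP]
    rw [hcardCF2] at h1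
    have h2 : DF.card * PF.card = DF.card * (4 * DF.card) := by rw [h1]; ring
    have h3 := Nat.eq_of_mul_eq_mul_left hDF0 h2
    rw [hcardCF2, h3]; ring
  -- the Gauss sum over ZMod
  set g : ℂ := ∑ a : ZMod (2^m), zz (2^m) ^ (a.val * a.val) with hg
  have hgval : g = ((Real.sqrt 2:ℝ):ℂ)^m * zz 4 := by
    rw [hg, ← gaussEval m (by omega)]
    refine Finset.sum_nbij' (fun a => a.val) (fun b => (b : ZMod (2^m))) ?_ ?_ ?_ ?_ ?_
    · intro a _; exact Finset.mem_range.mpr (ZMod.val_lt a)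
    · intro b _; exact Finset.mem_univ _
    · intro a _; simp [ZMod.natCast_val, ZMod.cast_id]
    · intro b hb; exact ZMod.val_cast_of_lt (Finset.mem_range.mp hb)
    · intro a _; rw [sq]
  have hsumV : ∑ v : (Fin n → ZMod (2 ^ m)), F v = g ^ n := by
    have hFv : ∀ v : (Fin n → ZMod (2 ^ m)), F v = ∏ i, zz (2^m) ^ ((v i).val * (v i).val) := by
      intro v
      rw [hF, Finset.prod_pow_eq_pow_sum]
      rfl
    have hswap := Finset.prod_univ_sum (fun _ : Fin n => (Finset.univ : Finset (ZMod (2^m))))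
      (fun _ a => zz (2^m) ^ (a.val * a.val))
    rw [Fintype.piFinset_univ] at hswap
    calc ∑ v : (Fin n → ZMod (2 ^ m)), F v = ∑ v : (Fin n → ZMod (2 ^ m)), ∏ i, zz (2^m) ^ ((v i).val * (v i).val) :=
          Finset.sum_congr rfl fun v _ => hFv v
      _ = ∏ _i : Fin n, g := hswap.symm
      _ = g ^ n := by rw [Finset.prod_const, Finset.card_univ, Fintype.card_fin]
  -- translating the main sum by elements of D
  have hchi_eq : ∀ c ∈ DF, ∀ v : (Fin n → ZMod (2 ^ m)), F v * chiF (2^m) c v = F (v + c) := by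
    intro c hc v
    have hcD := (hmemDF c).mp hc
    have hcC := hDC c hcD
    rw [hF, chiF]
    simp only []
    rw [← pow_add]
    refine zz_pow_congr hKpos ?_
    rw [← h2K]
    have h1 : dS (v+c) (v+c) ≡ dS v v + dS c c + 2 * dS v c [MOD 2^(m+1)] := hNNadd v c
    have hdc : dS c c ≡ 0 [MOD 2^(m+1)] :=
      (Nat.modEq_zero_iff_dvd).mpr ((hD_iff c hcC).mp hcD)
    have hvc : 2 * dS v c ≡ 2 * (dotp c v).val [MOD 2^(m+1)] := by
      have hd : dS v c ≡ (dotp c v).val [MOD 2^m] := by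
        have := dS_modEq v c
        rwa [dotp_comm] at this
      have h2 := Nat.ModEq.mul_left' (c := 2) hd
      rwa [← h2K] at h2
    calc dS v v + 2 * (dotp c v).val
        = dS v v + 0 + 2 * (dotp c v).val := by ring
      _ ≡ dS v v + dS c c + 2 * dS v c [MOD 2^(m+1)] :=
          ((Nat.ModEq.refl _).add hdc.symm).add hvc.symm
      _ ≡ dS (v+c) (v+c) [MOD 2^(m+1)] := h1.symm
  have hPFsum : (∑ v ∈ PF, F v) = g ^ n := by
    have hDFcast : (DF.card : ℂ) ≠ 0 := Nat.cast_ne_zero.mpr hDF0.ne'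
    have hT1 : ∑ v : (Fin n → ZMod (2 ^ m)), F v * (∑ c ∈ DF, chiF (2^m) c v) = (DF.card : ℂ) * ∑ v ∈ PF, F v := by
      calc ∑ v : (Fin n → ZMod (2 ^ m)), F v * (∑ c ∈ DF, chiF (2^m) c v)
          = ∑ v : (Fin n → ZMod (2 ^ m)), F v * (if ∀ c ∈ DF, dotp c v = 0 then (DF.card:ℂ) else 0) :=
            Finset.sum_congr rfl fun v _ => by rw [orth_sum hKpos DF hDSHIFT v]
        _ = ∑ v : (Fin n → ZMod (2 ^ m)), (if ∀ c ∈ DF, dotp c v = 0 then F v * DF.card else 0) := by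
            refine Finset.sum_congr rfl fun v _ => ?_
            split_ifs <;> simp
        _ = ∑ v ∈ Finset.univ.filter (fun v : (Fin n → ZMod (2 ^ m)) => ∀ c ∈ DF, dotp c v = 0), F v * DF.card :=
            (Finset.sum_filter _ _).symm
        _ = ∑ v ∈ PF, F v * DF.card := by rw [hfiltD]
        _ = (DF.card : ℂ) * ∑ v ∈ PF, F v := by rw [← Finset.sum_mul]; ring
    have hT2 : ∑ v : (Fin n → ZMod (2 ^ m)), F v * (∑ c ∈ DF, chiF (2^m) c v) = (DF.card : ℂ) * g ^ n := by
      calc ∑ v : (Fin n → ZMod (2 ^ m)), F v * (∑ c ∈ DF, chiF (2^m) c v)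
          = ∑ v : (Fin n → ZMod (2 ^ m)), ∑ c ∈ DF, F v * chiF (2^m) c v :=
            Finset.sum_congr rfl fun v _ => Finset.mul_sum _ _ _
        _ = ∑ c ∈ DF, ∑ v : (Fin n → ZMod (2 ^ m)), F v * chiF (2^m) c v := Finset.sum_comm
        _ = ∑ c ∈ DF, ∑ v : (Fin n → ZMod (2 ^ m)), F (v + c) :=
            Finset.sum_congr rfl fun c hc => Finset.sum_congr rfl fun v _ => hchi_eq c hc v
        _ = ∑ c ∈ DF, ∑ v : (Fin n → ZMod (2 ^ m)), F v := by
            refine Finset.sum_congr rfl fun c hc => ?_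
            exact (Fintype.sum_bijective (fun v : (Fin n → ZMod (2 ^ m)) => v + c) (Equiv.addRight c).bijective
              (fun v => F (v + c)) F (fun v => rfl)).symm ▸ rfl
        _ = ∑ c ∈ DF, g ^ n := Finset.sum_congr rfl fun c _ => hsumV
        _ = (DF.card : ℂ) * g ^ n := by rw [Finset.sum_const, nsmul_eq_mul]
    exact mul_left_cancel₀ hDFcast (hT1.symm.trans hT2)
  -- the sum over C vanishes
  have hFone : ∀ c ∈ DF, F c = 1 := by
    intro c hc
    have hcD := (hmemDF c).mp hc
    have hd : 2^(m+1) ∣ dS c c := (hD_iff c (hDC c hcD)).mp hcD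
    rw [hF]
    refine (zz_pow_eq_one_iff hKpos).mpr ?_
    rwa [← h2K]
  have hFneg : ∀ c ∈ CF, c ∉ DF → F c = -1 := by
    intro c hc hcd
    have hcC := (hmemCF c).mp hc
    have hcD : c ∉ D := fun h => hcd ((hmemDF c).mpr h)
    have h := hNN_K c hcC hcD
    rw [hF]
    simp only []
    rw [zz_pow_congr hKpos (show dS c c ≡ 2^m [MOD 2 * 2^m] from by rwa [← h2K])]
    exact zz_pow_K _ hKpos
  have hCFsum : (∑ v ∈ CF, F v) = 0 := by
    rw [← Finset.sum_sdiff hDFsub]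
    have hA : ∑ v ∈ CF \ DF, F v = -(DF.card : ℂ) := by
      calc ∑ v ∈ CF \ DF, F v = ∑ _v ∈ CF \ DF, (-1 : ℂ) :=
            Finset.sum_congr rfl fun v hv => by
              rw [Finset.mem_sdiff] at hv
              exact hFneg v hv.1 hv.2
        _ = -(DF.card:ℂ) := by rw [Finset.sum_const, hcard_half, nsmul_eq_mul]; ring
    have hB : ∑ v ∈ DF, F v = (DF.card : ℂ) := by
      calc ∑ v ∈ DF, F v = ∑ _v ∈ DF, (1:ℂ) := Finset.sum_congr rfl hFone
        _ = (DF.card:ℂ) := by rw [Finset.sum_const, nsmul_eq_mul]; ring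
    rw [hA, hB]; ring
  -- the shadow
  have hCFPF : CF ⊆ PF := by
    intro c hc
    refine (hmemPF c).mpr ?_
    intro u hu
    exact hdotCC u (hDC u hu) c ((hmemCF c).mp hc)
  have hsPF : s ∈ PF := (hmemPF s).mpr hs
  have hsCF : s ∉ CF := fun h => hsC ((hmemCF s).mp h)
  set SF := PF \ CF with hSFdef
  have hcardSF : SF.card = CF.card := by
    rw [hSFdef, Finset.card_sdiff_of_subset hCFPF, hcardPF]; omega
  have himg : CF.image (fun c => s + c) = SF := by
    refine Finset.eq_of_subset_of_card_le ?_ ?_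
    · intro x hx
      rw [Finset.mem_image] at hx
      obtain ⟨c, hc, rfl⟩ := hx
      have hcC := (hmemCF c).mp hc
      rw [hSFdef, Finset.mem_sdiff]
      constructor
      · refine (hmemPF _).mpr ?_
        intro u hu
        rw [dotp_add_right, hs u hu, hdotCC u (hDC u hu) c hcC, add_zero]
      · intro hmem
        apply hsC
        have : (s + c) + -c ∈ C := add_mem ((hmemCF _).mp hmem) (neg_mem hcC)
        rwa [add_assoc, add_neg_cancel, add_zero] at this
    · rw [hcardSF, Finset.card_image_of_injective _ (add_right_injective s)]
  have hx_form : ∀ x ∈ SF, ∃ c ∈ CF, s + c = x := by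
    intro x hx
    rw [← himg, Finset.mem_image] at hx
    exact hx
  -- constancy of F on the shadow
  have hconst : ∀ c ∈ CF, F (s + c) = F s := by
    intro c hc
    have hcC := (hmemCF c).mp hc
    have h1 := hNNadd s c
    rw [hF]
    simp only []
    by_cases hcD : c ∈ D
    · have hc0 : dS c c ≡ 0 [MOD 2^(m+1)] :=
        (Nat.modEq_zero_iff_dvd).mpr ((hD_iff c hcC).mp hcD)
      have hsc : 2 * dS s c ≡ 0 [MOD 2^(m+1)] := by
        have hd : dS s c ≡ 0 [MOD 2^m] := by
          have := dS_modEq s c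
          rwa [dotp_comm, hs c hcD, ZMod.val_zero] at this
        have h2 := Nat.ModEq.mul_left' (c := 2) hd
        rw [mul_zero] at h2; rwa [h2K]
      refine zz_pow_congr hKpos ?_
      rw [← h2K]
      calc dS (s+c) (s+c) ≡ dS s s + dS c c + 2 * dS s c [MOD 2^(m+1)] := h1
        _ ≡ dS s s + 0 + 0 [MOD 2^(m+1)] := ((Nat.ModEq.refl _).add hc0).add hsc
        _ = dS s s := by ring
    · have hcK : dS c c ≡ 2^m [MOD 2^(m+1)] := hNN_K c hcC hcD
      have hccD : c + c ∈ D := by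
        refine (hD_iff _ (add_mem hcC hcC)).mpr ((Nat.modEq_zero_iff_dvd).mp ?_)
        calc dS (c+c) (c+c) ≡ dS c c + dS c c + 2 * dS c c [MOD 2^(m+1)] := hNNadd c c
          _ = 4 * dS c c := by ring
          _ ≡ 4 * 2^m [MOD 2^(m+1)] := Nat.ModEq.mul_left 4 hcK
          _ ≡ 0 [MOD 2^(m+1)] := (Nat.modEq_zero_iff_dvd).mpr ⟨2, by rw [h2K]; ring⟩
      have hαα : dotp c s + dotp c s = 0 := by
        have := hs (c + c) hccD
        rwa [dotp_add_left] at this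
      have hα : dotp c s ≠ 0 := by
        intro hα0
        apply hsC
        have hsdual : s ∈ dualCode (C : Set (Fin n → ZMod (2 ^ m))) := by
          intro u hu
          by_cases huD : u ∈ D
          · exact hs u huD
          · have huC : u + c ∈ D := by
              refine (hD_iff _ (add_mem hu hcC)).mpr ((Nat.modEq_zero_iff_dvd).mp ?_)
              have huK : dS u u ≡ 2^m [MOD 2^(m+1)] := hNN_K u hu huD
              have h2d : 2 * dS u c ≡ 0 [MOD 2^(m+1)] := by
                have h2 := Nat.ModEq.mul_left' (c := 2) (hdSC u hu c hcC)
                rw [mul_zero] at h2; rwa [h2K]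
              calc dS (u+c) (u+c) ≡ dS u u + dS c c + 2 * dS u c [MOD 2^(m+1)] := hNNadd u c
                _ ≡ 2^m + 2^m + 0 [MOD 2^(m+1)] := (huK.add hcK).add h2d
                _ ≡ 0 [MOD 2^(m+1)] := by
                    rw [show (2:ℕ)^m + 2^m + 0 = 2^(m+1) from by rw [h2K]; ring]
                    exact (Nat.modEq_zero_iff_dvd).mpr dvd_rfl
            have h0 := hs (u + c) huC
            rw [dotp_add_left, hα0, add_zero] at h0
            exact h0
        rw [← hC] at hsdual
        exact hsdual
      have hval : (dotp c s).val = 2^(q+1) := by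
        have hcast : ((2 * (dotp c s).val : ℕ) : ZMod (2^m)) = 0 := by
          push_cast
          rw [ZMod.natCast_val, ZMod.cast_id, two_mul]
          exact hαα
        have hdvd : 2^m ∣ 2 * (dotp c s).val := (ZMod.natCast_eq_zero_iff _ _).mp hcast
        obtain ⟨t, ht⟩ := hdvd
        have hlt : (dotp c s).val < 2^m := ZMod.val_lt _
        have hne : (dotp c s).val ≠ 0 := fun h0 => hα ((ZMod.val_eq_zero _).mp h0)
        have hm4 : (2:ℕ)^m = 2 * 2^(q+1) := by rw [hq]; ring
        have hv2 : (dotp c s).val = 2^(q+1) * t := by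
          refine Nat.eq_of_mul_eq_mul_left (show 0 < 2 by norm_num) ?_
          rw [ht, hm4]; ring
        have hAt : 0 < 2^(q+1) := pow_pos (by norm_num) _
        have ht2 : t < 2 := by
          by_contra hge
          push_neg at hge
          have hmul : 2^(q+1) * 2 ≤ 2^(q+1) * t := Nat.mul_le_mul_left _ hge
          have hlt' : (dotp c s).val < 2 * 2^(q+1) := by rw [← hm4]; exact hlt
          omega
        have ht1 : t ≠ 0 := by
          intro h0
          rw [h0, mul_zero] at hv2
          exact hne hv2
        have : t = 1 := by omega
        rw [this, mul_one] at hv2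
        exact hv2
      have hsc : 2 * dS s c ≡ 2^m [MOD 2^(m+1)] := by
        have hd : dS s c ≡ 2^(q+1) [MOD 2^m] := by
          have := dS_modEq s c
          rwa [dotp_comm, hval] at this
        have h2 := Nat.ModEq.mul_left' (c := 2) hd
        rw [← h2K] at h2
        rwa [show 2 * 2^(q+1) = 2^m from by rw [hq]; ring] at h2
      refine zz_pow_congr hKpos ?_
      rw [← h2K]
      calc dS (s+c) (s+c) ≡ dS s s + dS c c + 2 * dS s c [MOD 2^(m+1)] := h1
        _ ≡ dS s s + 2^m + 2^m [MOD 2^(m+1)] := ((Nat.ModEq.refl _).add hcK).add hsc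
        _ = dS s s + (2^m + 2^m) := by ring
        _ ≡ dS s s + 0 [MOD 2^(m+1)] :=
            Nat.ModEq.add_left _ ((Nat.modEq_zero_iff_dvd).mpr ⟨1, by rw [h2K]; ring⟩)
        _ = dS s s := by ring
  -- final computation
  have hshadow_sum : ∑ v ∈ SF, F v = g ^ n := by
    have hsd := Finset.sum_sdiff (f := F) hCFPF
    rw [hCFsum, add_zero, hPFsum] at hsd
    exact hsd
  have hSFconst : ∑ v ∈ SF, F v = (CF.card : ℂ) * F s := by
    calc ∑ v ∈ SF, F v = ∑ _v ∈ SF, F s := by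
          refine Finset.sum_congr rfl fun x hx => ?_
          obtain ⟨c, hc, hcx⟩ := hx_form x hx
          rw [← hcx]
          exact hconst c hc
      _ = (SF.card : ℂ) * F s := by rw [Finset.sum_const, nsmul_eq_mul]
      _ = (CF.card : ℂ) * F s := by rw [hcardSF]
  have hCFcard_real : (CF.card : ℝ) = (Real.sqrt 2) ^ (m * n) := by
    have h1 : ((CF.card : ℝ))^2 = ((Real.sqrt 2) ^ (m*n))^2 := by
      rw [← pow_mul, mul_comm (m*n) 2, pow_mul, Real.sq_sqrt (by norm_num : (0:ℝ) ≤ 2)]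
      rw [sq, ← Nat.cast_mul, hcardC]
      push_cast
      rw [← pow_mul]
    calc (CF.card : ℝ) = Real.sqrt (((CF.card:ℝ))^2) := (Real.sqrt_sq (Nat.cast_nonneg _)).symm
      _ = Real.sqrt (((Real.sqrt 2) ^ (m*n))^2) := by rw [h1]
      _ = (Real.sqrt 2) ^ (m*n) := Real.sqrt_sq (pow_nonneg (Real.sqrt_nonneg 2) _)
  have hCFcardC : (CF.card : ℂ) = ((Real.sqrt 2 : ℝ) : ℂ) ^ (m*n) := by
    have := congrArg (fun x : ℝ => (x : ℂ)) hCFcard_real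
    push_cast at this
    exact_mod_cast this
  have hkey : ((Real.sqrt 2 : ℝ):ℂ)^(m*n) * F s = ((Real.sqrt 2 : ℝ):ℂ)^(m*n) * (zz 4)^n := by
    rw [← hCFcardC, ← hSFconst, hshadow_sum, hgval, mul_pow, ← pow_mul]
    rw [hCFcardC]
  have hsqrt_ne : ((Real.sqrt 2 : ℝ):ℂ)^(m*n) ≠ 0 := by
    refine pow_ne_zero _ ?_
    simp only [ne_eq, Complex.ofReal_eq_zero]
    positivity
  have hFs : F s = (zz 4)^n := mul_left_cancel₀ hsqrt_ne hkey
  have hz4 : (zz 4)^n = zz (2^m) ^ (2^(m-2) * n) := by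
    rw [show m - 2 = q from by omega, show (2:ℕ)^m = 2^(q+2) from by rw [hq]]
    rw [← zz_quarter q, ← pow_mul]
  rw [hz4, hF] at hFs
  simp only [] at hFs
  have hmod : dS s s ≡ 2^(m-2) * n [MOD 2 * 2^m] := zz_pow_inj hKpos hFs
  rw [← h2K] at hmod
  exact (hwtE s).trans hmod
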